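/- For any bi-infinite sequence (a_i) ∈ {1,2,3,4}^ℤ whose Markov value m((a_i)) := sup_{n∈ℤ} λ_n((a_i)) is strictly less than 4.55, the sequence cannot contain the subword 4,1 or the subword 4,2 (nor 1,4 nor 2,4). -/
import Mathlib


/-- Continued fraction numerators: `(cfP a n).1 = pₙ`, `(cfP a n).2 = pₙ₋₁`,
with `p₋₁ = 1`, `p₀ = a₀`, `pₙ₊₁ = aₙ₊₁ pₙ + pₙ₋₁`. -/
noncomputable def cfP (a : ℕ → ℝ) : ℕ → ℝ × ℝ
  | 0 => (a 0, 1)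
  | n + 1 => (a (n + 1) * (cfP a n).1 + (cfP a n).2, (cfP a n).1)

/-- Continued fraction denominators: `(cfQ a n).1 = qₙ`, `(cfQ a n).2 = qₙ₋₁`,
with `q₋₁ = 0`, `q₀ = 1`, `qₙ₊₁ = aₙ₊₁ qₙ + qₙ₋₁`. -/
noncomputable def cfQ (a : ℕ → ℝ) : ℕ → ℝ × ℝ
  | 0 => (1, 0)
  | n + 1 => (a (n + 1) * (cfQ a n).1 + (cfQ a n).2, (cfQ a n).1)

/-- The `n`-th convergent `[a₀; a₁, …, aₙ] = pₙ/qₙ` of the continued fraction with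
partial quotients `a`. -/
noncomputable def cfConv (a : ℕ → ℝ) (n : ℕ) : ℝ := (cfP a n).1 / (cfQ a n).1

private lemma cf_pos (a : ℕ → ℝ) (h : ∀ k, 1 ≤ a k) :
    ∀ n, (1 ≤ (cfP a n).1 ∧ 0 ≤ (cfP a n).2) ∧ (1 ≤ (cfQ a n).1 ∧ 0 ≤ (cfQ a n).2) := by
  intro n
  induction n with
  | zero => exact ⟨⟨h 0, by norm_num [cfP]⟩, by norm_num [cfQ]⟩
  | succ n ih =>
    obtain ⟨⟨hp1, hp2⟩, hq1, hq2⟩ := ih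
    have hk := h (n + 1)
    refine ⟨⟨?_, ?_⟩, ?_, ?_⟩
    · show 1 ≤ a (n+1) * (cfP a n).1 + (cfP a n).2; nlinarith
    · show (0:ℝ) ≤ (cfP a n).1; linarith
    · show 1 ≤ a (n+1) * (cfQ a n).1 + (cfQ a n).2; nlinarith
    · show (0:ℝ) ≤ (cfQ a n).1; linarith

private lemma cf_shift (a : ℕ → ℝ) :
    ∀ n, (cfP a (n+1)).1 = a 0 * (cfP (fun k => a (k+1)) n).1 + (cfQ (fun k => a (k+1)) n).1
      ∧ (cfP a (n+1)).2 = a 0 * (cfP (fun k => a (k+1)) n).2 + (cfQ (fun k => a (k+1)) n).2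
      ∧ (cfQ a (n+1)).1 = (cfP (fun k => a (k+1)) n).1
      ∧ (cfQ a (n+1)).2 = (cfP (fun k => a (k+1)) n).2 := by
  intro n
  induction n with
  | zero =>
    refine ⟨?_, ?_, ?_, ?_⟩ <;> simp [cfP, cfQ] <;> ring
  | succ n ih =>
    obtain ⟨h1, h2, h3, h4⟩ := ih
    have e1 : (cfP a (n+1+1)).1 = a (n+1+1) * (cfP a (n+1)).1 + (cfP a (n+1)).2 := rfl
    have e2 : (cfP a (n+1+1)).2 = (cfP a (n+1)).1 := rfl
    have e3 : (cfQ a (n+1+1)).1 = a (n+1+1) * (cfQ a (n+1)).1 + (cfQ a (n+1)).2 := rfl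
    have e4 : (cfQ a (n+1+1)).2 = (cfQ a (n+1)).1 := rfl
    have f1 : (cfP (fun k => a (k+1)) (n+1)).1
        = a (n+1+1) * (cfP (fun k => a (k+1)) n).1 + (cfP (fun k => a (k+1)) n).2 := rfl
    have f2 : (cfP (fun k => a (k+1)) (n+1)).2 = (cfP (fun k => a (k+1)) n).1 := rfl
    have f3 : (cfQ (fun k => a (k+1)) (n+1)).1
        = a (n+1+1) * (cfQ (fun k => a (k+1)) n).1 + (cfQ (fun k => a (k+1)) n).2 := rfl
    have f4 : (cfQ (fun k => a (k+1)) (n+1)).2 = (cfQ (fun k => a (k+1)) n).1 := rfl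
    refine ⟨?_, ?_, ?_, ?_⟩ <;>
      simp only [e1, e2, e3, e4, f1, f2, f3, f4, h1, h2, h3, h4] <;> ring

private lemma cf_step (a : ℕ → ℝ) (h : ∀ k, 1 ≤ a (k+1)) (n : ℕ) :
    cfConv a (n+1) = a 0 + 1 / cfConv (fun k => a (k+1)) n := by
  obtain ⟨h1, _, h3, _⟩ := cf_shift a n
  obtain ⟨⟨hp1, _⟩, hq1, _⟩ := cf_pos (fun k => a (k+1)) (fun k => h k) n
  have hp0 : (cfP (fun k => a (k+1)) n).1 ≠ 0 := by linarith
  have hq0 : (cfQ (fun k => a (k+1)) n).1 ≠ 0 := by linarith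
  rw [cfConv, cfConv, h1, h3]
  field_simp

private lemma conv_bounds (a : ℕ → ℝ) (h : ∀ k, 1 ≤ a k ∧ a k ≤ 4) :
    ∀ n, 1 ≤ cfConv a n ∧ cfConv a n ≤ 5 := by
  intro n
  induction n generalizing a with
  | zero =>
    have : cfConv a 0 = a 0 := by simp [cfConv, cfP, cfQ]
    rw [this]; exact ⟨(h 0).1, by linarith [(h 0).2]⟩
  | succ n ih =>
    have hstep := cf_step a (fun k => (h (k+1)).1) n
    obtain ⟨hl, hu⟩ := ih (fun k => a (k+1)) (fun k => h (k+1))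
    have hpos : (0:ℝ) < cfConv (fun k => a (k+1)) n := by linarith
    have h1 : 1/5 ≤ 1 / cfConv (fun k => a (k+1)) n := by
      apply one_div_le_one_div_of_le <;> linarith
    have h2 : 1 / cfConv (fun k => a (k+1)) n ≤ 1 := by
      rw [div_le_one hpos]; linarith
    constructor <;> rw [hstep] <;> [linarith [(h 0).1]; linarith [(h 0).2]]

private lemma conv_bounds1 (a : ℕ → ℝ) (h : ∀ k, 1 ≤ a k ∧ a k ≤ 4) (n : ℕ) :
    6/5 ≤ cfConv a (n+1) ∧ cfConv a (n+1) ≤ 5 := by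
  have hstep := cf_step a (fun k => (h (k+1)).1) n
  obtain ⟨hl, hu⟩ := conv_bounds (fun k => a (k+1)) (fun k => h (k+1)) n
  have hpos : (0:ℝ) < cfConv (fun k => a (k+1)) n := by linarith
  have h1 : 1/5 ≤ 1 / cfConv (fun k => a (k+1)) n := by
    apply one_div_le_one_div_of_le <;> linarith
  have h2 : 1 / cfConv (fun k => a (k+1)) n ≤ 1 := by
    rw [div_le_one hpos]; linarith
  constructor <;> rw [hstep] <;> [linarith [(h 0).1]; linarith [(h 0).2]]

private lemma conv_bounds2 (a : ℕ → ℝ) (h : ∀ k, 1 ≤ a k ∧ a k ≤ 4) (n : ℕ) :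
    6/5 ≤ cfConv a (n+2) ∧ cfConv a (n+2) ≤ 29/6 := by
  have hstep := cf_step a (fun k => (h (k+1)).1) (n+1)
  obtain ⟨hl, hu⟩ := conv_bounds1 (fun k => a (k+1)) (fun k => h (k+1)) n
  have hpos : (0:ℝ) < cfConv (fun k => a (k+1)) (n+1) := by linarith
  have h1 : 1/5 ≤ 1 / cfConv (fun k => a (k+1)) (n+1) := by
    apply one_div_le_one_div_of_le <;> linarith
  have h2 : 1 / cfConv (fun k => a (k+1)) (n+1) ≤ 5/6 := by
    rw [div_le_iff₀ hpos]; linarith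
  constructor <;> rw [hstep] <;> [linarith [(h 0).1]; linarith [(h 0).2]]

private lemma conv_bounds3 (a : ℕ → ℝ) (h : ∀ k, 1 ≤ a k ∧ a k ≤ 4) (n : ℕ) :
    35/29 ≤ cfConv a (n+3) ∧ cfConv a (n+3) ≤ 29/6 := by
  have hstep := cf_step a (fun k => (h (k+1)).1) (n+2)
  obtain ⟨hl, hu⟩ := conv_bounds2 (fun k => a (k+1)) (fun k => h (k+1)) n
  have hpos : (0:ℝ) < cfConv (fun k => a (k+1)) (n+2) := by linarith
  have h1 : 6/29 ≤ 1 / cfConv (fun k => a (k+1)) (n+2) := by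
    rw [le_div_iff₀ hpos]; linarith
  have h2 : 1 / cfConv (fun k => a (k+1)) (n+2) ≤ 5/6 := by
    rw [div_le_iff₀ hpos]; linarith
  constructor <;> rw [hstep] <;> [linarith [(h 0).1]; linarith [(h 0).2]]

/-- upper bound: conv of [d0; tail] at any level ≥ 1 is ≤ d0 + 1 -/
private lemma conv_tail_ub (d : ℕ → ℝ) (h : ∀ k, 1 ≤ d (k+1) ∧ d (k+1) ≤ 4) (m : ℕ) :
    cfConv d (m+1) ≤ d 0 + 1 := by
  have hstep := cf_step d (fun k => (h k).1) m
  obtain ⟨hl, hu⟩ := conv_bounds (fun k => d (k+1)) h m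
  have hpos : (0:ℝ) < cfConv (fun k => d (k+1)) m := by linarith
  have h2 : 1 / cfConv (fun k => d (k+1)) m ≤ 1 := by
    rw [div_le_one hpos]; linarith
  rw [hstep]; linarith

/-- lower bound: conv of [d0; tail] at any level ≥ 1 is ≥ d0 + 1/5 -/
private lemma conv_tail_lb0 (d : ℕ → ℝ) (h : ∀ k, 1 ≤ d (k+1) ∧ d (k+1) ≤ 4) (m : ℕ) :
    d 0 + 1/5 ≤ cfConv d (m+1) := by
  have hstep := cf_step d (fun k => (h k).1) m
  obtain ⟨hl, hu⟩ := conv_bounds (fun k => d (k+1)) h m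
  have hpos : (0:ℝ) < cfConv (fun k => d (k+1)) m := by linarith
  have h1 : 1/5 ≤ 1 / cfConv (fun k => d (k+1)) m := by
    apply one_div_le_one_div_of_le <;> linarith
  rw [hstep]; linarith

/-- lower bound: conv of [d0; tail] at level ≥ 4 is ≥ d0 + 6/29 -/
private lemma conv_tail_lb (d : ℕ → ℝ) (h : ∀ k, 1 ≤ d (k+1) ∧ d (k+1) ≤ 4) (m : ℕ) :
    d 0 + 6/29 ≤ cfConv d (m+4) := by
  have hstep := cf_step d (fun k => (h k).1) (m+3)
  obtain ⟨hl, hu⟩ := conv_bounds3 (fun k => d (k+1)) h m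
  have hpos : (0:ℝ) < cfConv (fun k => d (k+1)) (m+3) := by linarith
  have h1 : 6/29 ≤ 1 / cfConv (fun k => d (k+1)) (m+3) := by
    rw [le_div_iff₀ hpos]; linarith
  rw [hstep]; linarith

/-- two-digit lower bound: conv of [d0; d1, tail] at level ≥ 5 is ≥ d0 + 1/(d1 + 29/35) -/
private lemma conv_tail_lb2 (d : ℕ → ℝ) (h : ∀ k, 1 ≤ d (k+1) ∧ d (k+1) ≤ 4) (m : ℕ) :
    d 0 + 1 / (d 1 + 29/35) ≤ cfConv d (m+5) := by
  have hstep := cf_step d (fun k => (h k).1) (m+4)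
  have hstep2 := cf_step (fun k => d (k+1)) (fun k => (h (k+1)).1) (m+3)
  obtain ⟨hl3, hu3⟩ := conv_bounds3 (fun k => d (k+1+1)) (fun k => h (k+1)) m
  have hpos3 : (0:ℝ) < cfConv (fun k => d (k+1+1)) (m+3) := by linarith
  have hinner : 1 / cfConv (fun k => d (k+1+1)) (m+3) ≤ 29/35 := by
    rw [div_le_iff₀ hpos3]; linarith
  have hinner0 : 0 < 1 / cfConv (fun k => d (k+1+1)) (m+3) := by positivity
  have hub : cfConv (fun k => d (k+1)) (m+4) ≤ d 1 + 29/35 := by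
    rw [hstep2]; have := (h 0).1; linarith
  obtain ⟨hl', hu'⟩ := conv_bounds1 (fun k => d (k+1)) h (m+3)
  have hpos' : (0:ℝ) < cfConv (fun k => d (k+1)) (m+4) := by linarith
  have : 1 / (d 1 + 29/35) ≤ 1 / cfConv (fun k => d (k+1)) (m+4) :=
    one_div_le_one_div_of_le hpos' hub
  rw [hstep]; linarith

/-- `x` is the value of the infinite continued fraction `[a₀; a₁, a₂, …]`, i.e. the limit
of its convergents. -/
def IsCFVal (a : ℕ → ℝ) (x : ℝ) : Prop :=
  Filter.Tendsto (cfConv a) Filter.atTop (nhds x)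

private lemma val_ge (d : ℕ → ℝ) (x c : ℝ) (hx : IsCFVal d x) (K : ℕ)
    (h : ∀ m, c ≤ cfConv d (m + K)) : c ≤ x := by
  refine ge_of_tendsto hx (Filter.eventually_atTop.2 ⟨K, fun m hm => ?_⟩)
  have := h (m - K); rwa [Nat.sub_add_cancel hm] at this

private lemma val_le (d : ℕ → ℝ) (x c : ℝ) (hx : IsCFVal d x) (K : ℕ)
    (h : ∀ m, cfConv d (m + K) ≤ c) : x ≤ c := by
  refine le_of_tendsto hx (Filter.eventually_atTop.2 ⟨K, fun m hm => ?_⟩)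
  have := h (m - K); rwa [Nat.sub_add_cancel hm] at this

/-- `lam n` is `λₙ` of the bi-infinite sequence `a`: the sum of the values of the
continued fractions `[aₙ; aₙ₋₁, …]` and `[0; aₙ₊₁, …]`. -/
def IsLambda (a : ℤ → ℕ) (lam : ℤ → ℝ) : Prop :=
  ∀ n : ℤ, ∃ ℓL ℓR : ℝ,
    IsCFVal (fun k => (a (n - (k : ℤ)) : ℝ)) ℓL ∧
    IsCFVal (fun k => if k = 0 then 0 else (a (n + (k : ℤ)) : ℝ)) ℓR ∧
    lam n = ℓL + ℓR

private lemma digR (a : ℤ → ℕ) (hdig : ∀ i, 1 ≤ a i ∧ a i ≤ 4) (n : ℤ) :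
    ∀ k : ℕ, 1 ≤ (fun k : ℕ => if k = 0 then (0:ℝ) else (a (n + (k : ℤ)) : ℝ)) (k+1) ∧
      (fun k : ℕ => if k = 0 then (0:ℝ) else (a (n + (k : ℤ)) : ℝ)) (k+1) ≤ 4 := by
  intro k
  simp only [Nat.succ_ne_zero, if_neg]
  constructor
  · exact_mod_cast (hdig (n + ((k:ℕ)+1 : ℕ))).1
  · exact_mod_cast (hdig (n + ((k:ℕ)+1 : ℕ))).2

private lemma digL (a : ℤ → ℕ) (hdig : ∀ i, 1 ≤ a i ∧ a i ≤ 4) (n : ℤ) :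
    ∀ k : ℕ, 1 ≤ (fun k : ℕ => (a (n - (k : ℤ)) : ℝ)) k ∧
      (fun k : ℕ => (a (n - (k : ℤ)) : ℝ)) k ≤ 4 := by
  intro k
  dsimp only
  constructor
  · exact_mod_cast (hdig (n - k)).1
  · exact_mod_cast (hdig (n - k)).2

/-- Any bi-infinite sequence with digits in `{1,2,3,4}` whose Markov value
`m(a) = ⨆ n, λₙ(a)` is strictly less than `4.55` contains no subword `41`, `14`,
`42` or `24`. -/
theorem stmt_17 (a : ℤ → ℕ) (hdig : ∀ i, 1 ≤ a i ∧ a i ≤ 4)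
    (lam : ℤ → ℝ) (hlam : IsLambda a lam)
    (hM : (⨆ n : ℤ, lam n) < 4.55) :
    ∀ n : ℤ, ¬(a n = 4 ∧ a (n + 1) = 1) ∧ ¬(a n = 1 ∧ a (n + 1) = 4) ∧
      ¬(a n = 4 ∧ a (n + 1) = 2) ∧ ¬(a n = 2 ∧ a (n + 1) = 4) := by
  -- every lam n is at most 9, so the range is bounded above
  have hbdd : BddAbove (Set.range lam) := by
    refine ⟨9, ?_⟩
    rintro x ⟨n, rfl⟩
    obtain ⟨lL, lR, hL, hR, heq⟩ := hlam n
    have h1 : lL ≤ (a (n - ((0:ℕ):ℤ)) : ℝ) + 1 :=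
      val_le _ lL _ hL 1 (conv_tail_ub _ (fun k => digL a hdig n (k+1)))
    have h2 : lR ≤ 0 + 1 := by
      have := val_le _ lR _ hR 1 (conv_tail_ub _ (digR a hdig n))
      simpa using this
    have ha : (a (n - ((0:ℕ):ℤ)) : ℝ) ≤ 4 := by exact_mod_cast (hdig _).2
    rw [heq]; linarith
  have hsup : ∀ n : ℤ, lam n < 4.55 := fun n => lt_of_le_of_lt (le_ciSup hbdd n) hM
  have claim1 : ∀ p : ℤ, a p = 4 → (a (p+1) = 1 ∨ a (p+1) = 2) → False := by
    intro p hp hc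
    obtain ⟨lL, lR, hL, hR, heq⟩ := hlam p
    have hLlb : (4:ℝ) + 1/5 ≤ lL := by
      have := val_ge _ lL _ hL 1 (conv_tail_lb0 _ (fun k => digL a hdig p (k+1)))
      simpa [hp] using this
    have hRlb : 1 / ((a (p+1) : ℝ) + 29/35) ≤ lR := by
      have := val_ge _ lR _ hR 5 (conv_tail_lb2 _ (digR a hdig p))
      simpa using this
    have hlt := hsup p
    rw [heq] at hlt
    rcases hc with hc | hc <;> rw [hc] at hRlb <;> norm_num at hRlb hlt <;> linarith
  have claim2 : ∀ p : ℤ, a p = 4 → (a (p-1) = 1 ∨ a (p-1) = 2) → False := by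
    intro p hp hc
    obtain ⟨lL, lR, hL, hR, heq⟩ := hlam p
    have hLlb : (4:ℝ) + 1/((a (p-1):ℝ) + 29/35) ≤ lL := by
      have := val_ge _ lL _ hL 5 (conv_tail_lb2 _ (fun k => digL a hdig p (k+1)))
      simpa [hp] using this
    have hRlb : (6:ℝ)/29 ≤ lR := by
      have := val_ge _ lR _ hR 4 (conv_tail_lb _ (digR a hdig p))
      simpa using this
    have hlt := hsup p
    rw [heq] at hlt
    rcases hc with hc | hc <;> rw [hc] at hLlb <;> norm_num at hLlb hlt <;> linarith
  intro n
  have hn : n + 1 - 1 = n := by ring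
  refine ⟨?_, ?_, ?_, ?_⟩
  · rintro ⟨h1, h2⟩; exact claim1 n h1 (Or.inl h2)
  · rintro ⟨h1, h2⟩; refine claim2 (n+1) h2 ?_; rw [hn]; exact Or.inl h1
  · rintro ⟨h1, h2⟩; exact claim1 n h1 (Or.inr h2)
  · rintro ⟨h1, h2⟩; refine claim2 (n+1) h2 ?_; rw [hn]; exact Or.inr h1
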